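/- The map t ↦ θ₄(e^{-πt})² / θ₃(e^{-πt})² (the complementary elliptic modulus at nome e^{-πt}) is a strictly increasing bijection from (0,∞) onto (0,1). -/

import Mathlib

noncomputable section

/-- Theta-null `θ₂(q) = ∑_{k∈ℤ} q^{(k+1/2)²}`. -/
def theta2 (q : ℝ) : ℝ := ∑' k : ℤ, q ^ (((k : ℝ) + 1/2)^2)

/-- Theta-null `θ₃(q) = ∑_{k∈ℤ} q^{k²}`. -/
def theta3 (q : ℝ) : ℝ := ∑' k : ℤ, q ^ (k^2)

/-- Theta-null `θ₄(q) = ∑_{k∈ℤ} (-1)^k q^{k²}`. -/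
def theta4 (q : ℝ) : ℝ := ∑' k : ℤ, (-1 : ℝ) ^ k * q ^ (k^2)

/-- Jacobi theta function `θ₃(z,q) = ∑_{k∈ℤ} q^{k²} e^{2πikz}` (real-valued for real z, q∈(0,1)). -/
def jTheta3 (z q : ℝ) : ℝ :=
  (∑' k : ℤ, (q : ℂ) ^ (k^2) * Complex.exp (2 * Real.pi * Complex.I * k * z)).re

/-- Jacobi theta function as a complex number. -/
def jTheta3C (z q : ℝ) : ℂ :=
  ∑' k : ℤ, (q : ℂ) ^ (k^2) * Complex.exp (2 * Real.pi * Complex.I * k * z)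

/-- Gauss hypergeometric series `₂F₁(a,b;c;x)`. -/
def hyp2F1 (a b c x : ℝ) : ℝ :=
  ∑' n : ℕ, ((ascPochhammer ℝ n).eval a * (ascPochhammer ℝ n).eval b /
    (ascPochhammer ℝ n).eval c) * x ^ n / (n.factorial : ℝ)

/-- Borwein cubic theta function `a(q)`. -/
def borA (q : ℝ) : ℝ := ∑' p : ℤ × ℤ, q ^ (p.1^2 + p.1 * p.2 + p.2^2)

/-- Borwein cubic theta function `b(q)` (real-valued). -/
def borB (q : ℝ) : ℝ :=
  (∑' p : ℤ × ℤ, (q : ℂ) ^ (p.1^2 + p.1 * p.2 + p.2^2) *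
    Complex.exp (2 * Real.pi * Complex.I * (((p.1 : ℝ) - (p.2 : ℝ)) / 3))).re

/-- Borwein cubic theta function `c(q)`. -/
def borC (q : ℝ) : ℝ :=
  ∑' p : ℤ × ℤ, q ^ ((((p.1 : ℝ)) + 1/3)^2 + ((p.1 : ℝ) + 1/3) * ((p.2 : ℝ) + 1/3) +
    (((p.2 : ℝ)) + 1/3)^2)

/-- Periodized Gaussian (heat kernel) on the torus ℝ²/(Sℤ²). -/
def heatK (S : Matrix.SpecialLinearGroup (Fin 2) ℝ) (t : ℝ) (z : Fin 2 → ℝ) : ℝ :=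
  (1/t) * ∑' l : Fin 2 → ℤ,
    Real.exp (-(Real.pi / t) *
      (((S : Matrix (Fin 2) (Fin 2) ℝ).mulVec (fun i => (l i : ℝ) + z i) 0)^2 +
       ((S : Matrix (Fin 2) (Fin 2) ℝ).mulVec (fun i => (l i : ℝ) + z i) 1)^2))

end

section Aux
open Real Set Filter Topology

noncomputable def T3 (t : ℝ) : ℝ := ∑' k : ℤ, Real.exp (-π * t * (k:ℝ)^2)
noncomputable def T4 (t : ℝ) : ℝ := ∑' k : ℤ, (-1:ℝ)^k * Real.exp (-π * t * (k:ℝ)^2)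
noncomputable def T2' (t : ℝ) : ℝ := ∑' k : ℤ, Real.exp (-π * t * ((k:ℝ) - 1/2)^2)

lemma summable_shift {t : ℝ} (ht : 0 < t) (c : ℝ) :
    Summable (fun k : ℤ => Real.exp (-π * t * ((k:ℝ) + c)^2)) := by
  refine Summable.of_nonneg_of_le (fun k => (Real.exp_pos _).le) ?_
    (summable_pow_mul_jacobiTheta₂_term_bound (t * |c|) ht 0)
  intro k
  rw [pow_zero, one_mul]
  apply Real.exp_le_exp.2
  have hk : ((|k| : ℤ) : ℝ) = |(k:ℝ)| := by push_cast; simp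
  rw [hk]
  have h1 : -((k:ℝ)) * c ≤ |(k:ℝ)| * |c| := by
    calc -((k:ℝ)) * c ≤ |(-(k:ℝ)) * c| := le_abs_self _
    _ = |(k:ℝ)| * |c| := by rw [abs_mul, abs_neg]
  nlinarith [sq_nonneg c, mul_nonneg (mul_nonneg Real.pi_pos.le ht.le) (sq_nonneg c),
    mul_le_mul_of_nonneg_left h1 (mul_pos Real.pi_pos ht).le]

lemma summable3 {t : ℝ} (ht : 0 < t) :
    Summable (fun k : ℤ => Real.exp (-π * t * (k:ℝ)^2)) := by
  simpa using summable_shift ht 0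

lemma summable2 {t : ℝ} (ht : 0 < t) :
    Summable (fun k : ℤ => Real.exp (-π * t * ((k:ℝ) - 1/2)^2)) := by
  simpa [sub_eq_add_neg] using summable_shift ht (-(1/2))

lemma summable4 {t : ℝ} (ht : 0 < t) :
    Summable (fun k : ℤ => (-1:ℝ)^k * Real.exp (-π * t * (k:ℝ)^2)) := by
  refine Summable.of_norm ?_
  have : ∀ k : ℤ, ‖(-1:ℝ)^k * Real.exp (-π * t * (k:ℝ)^2)‖ = Real.exp (-π * t * (k:ℝ)^2) := by
    intro k
    rcases Int.even_or_odd k with h | h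
    · rw [h.neg_one_zpow]; simp [abs_of_pos (Real.exp_pos _)]
    · rw [h.neg_one_zpow]; simp [abs_of_pos (Real.exp_pos _)]
  rw [funext this]
  exact summable3 ht

lemma T3_pos {t : ℝ} (ht : 0 < t) : 0 < T3 t :=
  Summable.tsum_pos (summable3 ht) (fun k => (Real.exp_pos _).le) 0 (Real.exp_pos _)

lemma T2'_pos {t : ℝ} (ht : 0 < t) : 0 < T2' t :=
  Summable.tsum_pos (summable2 ht) (fun k => (Real.exp_pos _).le) 0 (Real.exp_pos _)

lemma funceq3 {t : ℝ} (ht : 0 < t) : T3 t = (Real.sqrt t)⁻¹ * T3 t⁻¹ := by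
  have h := Real.tsum_exp_neg_mul_int_sq ht
  rw [T3, T3, h, Real.sqrt_eq_rpow, one_div]
  congr 1

lemma funceq4 {t : ℝ} (ht : 0 < t) : T4 t = (Real.sqrt t)⁻¹ * T2' t⁻¹ := by
  have ht' : 0 < (t:ℂ).re := by simpa using ht
  have key := Complex.tsum_exp_neg_quadratic ht' (Complex.I / 2)
  have hL : (∑' n : ℤ, Complex.exp (-π*(t:ℂ)*(n:ℂ)^2 + 2*π*(Complex.I/2)*(n:ℂ)))
      = ((T4 t : ℝ) : ℂ) := by
    rw [T4, Complex.ofReal_tsum]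
    refine tsum_congr fun n => ?_
    have h1 : (-π*(t:ℂ)*(n:ℂ)^2 + 2*π*(Complex.I/2)*(n:ℂ))
        = ((-π*t*(n:ℝ)^2 : ℝ) : ℂ) + n*(π*Complex.I) := by push_cast; ring
    rw [h1, Complex.exp_add, Complex.exp_int_mul, Complex.exp_pi_mul_I]
    push_cast
    ring
  have hR : (∑' n : ℤ, Complex.exp (-π/(t:ℂ) * ((n:ℂ) + Complex.I*(Complex.I/2))^2))
      = ((T2' t⁻¹ : ℝ) : ℂ) := by
    rw [T2', Complex.ofReal_tsum]
    refine tsum_congr fun n => ?_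
    have h1 : (-π/(t:ℂ) * ((n:ℂ) + Complex.I*(Complex.I/2))^2)
        = ((-π * t⁻¹ * ((n:ℝ) - 1/2)^2 : ℝ) : ℂ) := by
      have hI : Complex.I * (Complex.I/2) = -(1/2) := by
        rw [mul_div_assoc', Complex.I_mul_I]; norm_num
      rw [hI, div_eq_mul_inv, ← Complex.ofReal_inv]
      push_cast
      ring
    rw [h1, Complex.ofReal_exp]
  have hC : (1 : ℂ) / (t:ℂ) ^ (1/2 : ℂ) = (((Real.sqrt t)⁻¹ : ℝ) : ℂ) := by
    have h12 : (1/2 : ℂ) = ((1/2 : ℝ) : ℂ) := by norm_num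
    rw [h12, ← Complex.ofReal_cpow ht.le, Real.sqrt_eq_rpow, ← Complex.ofReal_one,
      ← Complex.ofReal_div, Complex.ofReal_inj, one_div]
  rw [hL, hR, hC, ← Complex.ofReal_mul, Complex.ofReal_inj] at key
  exact key

set_option maxHeartbeats 1000000 in
lemma tsum_int_even {f : ℤ → ℝ} (hf : Summable f) (he : ∀ k : ℤ, f (-k) = f k) :
    ∑' k : ℤ, f k = f 0 + 2 * ∑' n : ℕ, f ((n:ℤ) + 1) := by
  have h1 : Summable (fun n : ℕ => f n) := hf.comp_injective (fun a b h => by exact_mod_cast h)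
  have h1' : Summable (fun n : ℕ => f ((n:ℤ) + 1)) := by
    have h2 := (summable_nat_add_iff 1).2 h1
    exact h2.congr (fun n => by push_cast; ring_nf)
  have h2 : Summable (fun n : ℕ => f (-((n:ℤ) + 1))) := h1'.congr (fun n => (he _).symm)
  rw [tsum_of_nat_of_neg_add_one h1 h2]
  have e2 : ∑' n : ℕ, f (-((n:ℤ) + 1)) = ∑' n : ℕ, f ((n:ℤ) + 1) :=
    tsum_congr fun n => he _
  rw [e2, tsum_eq_zero_add' h1']
  push_cast
  ring


lemma neg_one_zpow_neg (k : ℤ) : ((-1:ℝ)) ^ (-k) = (-1:ℝ) ^ k := by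
  rw [zpow_neg]
  rcases Int.even_or_odd k with h | h
  · rw [h.neg_one_zpow]; norm_num
  · rw [h.neg_one_zpow]; norm_num

lemma summable_comp_int {t : ℝ} (ht : 0 < t) {ι : ℕ → ℤ} (hι : Function.Injective ι) :
    Summable (fun n : ℕ => Real.exp (-π * t * ((ι n : ℝ))^2)) :=
  (summable3 ht).comp_injective hι

lemma T3_decomp {t : ℝ} (ht : 0 < t) :
    T3 t = 1 + 2 * ∑' n : ℕ, Real.exp (-π * t * ((n:ℝ) + 1)^2) := by
  rw [T3, tsum_int_even (summable3 ht) (fun k => by push_cast; ring_nf)]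
  norm_num

lemma T4_decomp {t : ℝ} (ht : 0 < t) :
    T4 t = 1 + 2 * ∑' n : ℕ, (-1:ℝ)^(n+1) * Real.exp (-π * t * ((n:ℝ) + 1)^2) := by
  rw [T4, tsum_int_even (summable4 ht) (fun k => by
    rw [neg_one_zpow_neg]; push_cast; ring_nf)]
  norm_num
  refine tsum_congr fun n => ?_
  congr 1
lemma T4_pos {t : ℝ} (ht : 0 < t) : 0 < T4 t := by
  rw [funceq4 ht]
  exact mul_pos (inv_pos.2 (Real.sqrt_pos.2 ht)) (T2'_pos (inv_pos.2 ht))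

lemma T4_lt_T3 {t : ℝ} (ht : 0 < t) : T4 t < T3 t := by
  rw [T3, T4]
  refine Summable.tsum_lt_tsum (i := 1) (fun k => ?_) ?_ (summable4 ht) (summable3 ht)
  · rcases Int.even_or_odd k with h | h
    · rw [h.neg_one_zpow, one_mul]
    · rw [h.neg_one_zpow]
      nlinarith [Real.exp_pos (-π * t * (k:ℝ)^2)]
  · have h : Odd (1:ℤ) := ⟨0, by ring⟩
    rw [h.neg_one_zpow]
    nlinarith [Real.exp_pos (-π * t * ((1:ℤ):ℝ)^2)]

lemma T3_strictAnti : StrictAntiOn T3 (Ioi 0) := by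
  intro s hs t ht hst
  rw [T3, T3]
  refine Summable.tsum_lt_tsum (i := 1) (fun k => Real.exp_le_exp.2 ?_) ?_
    (summable3 (lt_trans hs hst)) (summable3 hs)
  · nlinarith [mul_nonneg (mul_nonneg Real.pi_pos.le (sub_nonneg.2 hst.le)) (sq_nonneg (k:ℝ))]
  · apply Real.exp_lt_exp.2
    push_cast
    nlinarith [Real.pi_pos]

lemma summable_pair1 {t : ℝ} (ht : 0 < t) :
    Summable (fun j : ℕ => Real.exp (-π * t * (2*(j:ℝ)+1)^2)) := by
  have h := summable_comp_int ht (ι := fun j : ℕ => 2*(j:ℤ)+1)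
    (fun a b hab => by simp only at hab; omega)
  exact h.congr fun j => by push_cast; ring_nf

lemma summable_pair2 {t : ℝ} (ht : 0 < t) :
    Summable (fun j : ℕ => Real.exp (-π * t * (2*(j:ℝ)+2)^2)) := by
  have h := summable_comp_int ht (ι := fun j : ℕ => 2*(j:ℤ)+2)
    (fun a b hab => by simp only at hab; omega)
  exact h.congr fun j => by push_cast; ring_nf

lemma T4_pair {t : ℝ} (ht : 0 < t) :
    T4 t = 1 - 2 * ∑' j : ℕ,
      (Real.exp (-π * t * (2*(j:ℝ)+1)^2) - Real.exp (-π * t * (2*(j:ℝ)+2)^2)) := by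
  have hs1 := summable_pair1 ht
  have hs2 := summable_pair2 ht
  set g : ℕ → ℝ := fun n => (-1:ℝ)^(n+1) * Real.exp (-π * t * ((n:ℝ)+1)^2) with hg
  have hge : ∀ k : ℕ, g (2*k) = -Real.exp (-π * t * (2*(k:ℝ)+1)^2) := by
    intro k
    have ho : Odd (2*k+1) := ⟨k, by ring⟩
    rw [hg]
    simp only [ho.neg_one_pow]
    push_cast
    ring_nf
  have hgo : ∀ k : ℕ, g (2*k+1) = Real.exp (-π * t * (2*(k:ℝ)+2)^2) := by
    intro k
    have he : Even (2*k+1+1) := ⟨k+1, by ring⟩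
    rw [hg]
    simp only [he.neg_one_pow]
    push_cast
    ring_nf
  have h2e : Summable (fun k : ℕ => g (2*k)) := by
    rw [funext hge]; exact hs1.neg
  have h2o : Summable (fun k : ℕ => g (2*k+1)) := by
    rw [funext hgo]; exact hs2
  have key := tsum_even_add_odd h2e h2o
  rw [T4_decomp ht, ← hg, ← key, funext hge, funext hgo, tsum_neg,
    Summable.tsum_sub hs1 hs2]
  ring

lemma termA_strictMono {m : ℝ} (hm : 1/4 ≤ m) :
    StrictMonoOn (fun t : ℝ => (Real.sqrt t)⁻¹ * Real.exp (-π * t⁻¹ * m)) (Ioo 0 (π/2)) := by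
  have hD : ∀ t ∈ Ioo (0:ℝ) (π/2), HasDerivAt
      (fun t : ℝ => (Real.sqrt t)⁻¹ * Real.exp (-π * t⁻¹ * m))
      (Real.exp (-π * t⁻¹ * m) * (π * m - t/2) / (Real.sqrt t * t^2)) t := by
    intro t ht
    have ht0 : 0 < t := ht.1
    have hs : 0 < Real.sqrt t := Real.sqrt_pos.2 ht0
    have hsq : Real.sqrt t ^ 2 = t := Real.sq_sqrt ht0.le
    have h1 : HasDerivAt (fun t : ℝ => (Real.sqrt t)⁻¹)
        (-(1/(2 * Real.sqrt t)) / (Real.sqrt t)^2) t :=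
      (Real.hasDerivAt_sqrt ht0.ne').inv hs.ne'
    have h2 : HasDerivAt (fun t : ℝ => -π * t⁻¹ * m) (-π * (-(t^2)⁻¹) * m) t :=
      ((hasDerivAt_inv ht0.ne').const_mul (-π)).mul_const m
    have h3 := (h2.exp)
    have h4 : HasDerivAt (fun t : ℝ => (Real.sqrt t)⁻¹ * Real.exp (-π * t⁻¹ * m)) _ t :=
      h1.fun_mul h3
    convert h4 using 1
    have hsc : Real.sqrt t * Real.sqrt t = t := Real.mul_self_sqrt ht0.le
    field_simp
    rw [hsq]
    ring
  have key : ∀ t ∈ interior (Ioo (0:ℝ) (π/2)),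
      0 < deriv (fun t : ℝ => (Real.sqrt t)⁻¹ * Real.exp (-π * t⁻¹ * m)) t := by
    rw [interior_Ioo]
    intro t ht
    rw [(hD t ht).deriv]
    have ht0 : 0 < t := ht.1
    have hs : 0 < Real.sqrt t := Real.sqrt_pos.2 ht0
    apply div_pos
    · apply mul_pos (Real.exp_pos _)
      nlinarith [ht.2, Real.pi_pos]
    · positivity
  exact strictMonoOn_of_deriv_pos (convex_Ioo _ _)
    (fun t ht => ((hD t ht).continuousAt.continuousWithinAt)) key

lemma termB_strictAnti {a b : ℝ} (ha : 1 ≤ a) (hab : a + 3 ≤ b) (hb4 : b ≤ 4 * a) :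
    StrictAntiOn (fun t : ℝ => Real.exp (-π * t * a) - Real.exp (-π * t * b))
      (Ici (1/2 : ℝ)) := by
  have hD : ∀ t : ℝ, HasDerivAt
      (fun t : ℝ => Real.exp (-π * t * a) - Real.exp (-π * t * b))
      (Real.exp (-π * t * a) * (-π * a) - Real.exp (-π * t * b) * (-π * b)) t := by
    intro t
    have h1 : HasDerivAt (fun t : ℝ => -π * t * a) (-π * a) t := by
      simpa using ((hasDerivAt_id t).const_mul (-π)).mul_const a
    have h2 : HasDerivAt (fun t : ℝ => -π * t * b) (-π * b) t := by
      simpa using ((hasDerivAt_id t).const_mul (-π)).mul_const b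
    exact (h1.exp).sub (h2.exp)
  apply strictAntiOn_of_deriv_neg (convex_Ici _)
    (Continuous.continuousOn (by continuity))
  rw [interior_Ici]
  intro t ht
  rw [(hD t).deriv]
  have ht2 : (1/2 : ℝ) < t := ht
  have hx : (4:ℝ) < Real.exp (π * t * (b - a)) := by
    have hba : (3:ℝ) ≤ b - a := by linarith
    have hπt : (3/2 : ℝ) < π * t := by nlinarith [Real.pi_gt_three]
    have h1 : (4:ℝ) < π * t * (b - a) + 1 := by nlinarith [hπt, hba]
    linarith [Real.add_one_le_exp (π * t * (b - a))]
  have key : b * Real.exp (-π * t * b) < a * Real.exp (-π * t * a) := by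
    have h1 : Real.exp (-π * t * b) * Real.exp (π * t * (b - a)) = Real.exp (-π * t * a) := by
      rw [← Real.exp_add]; ring_nf
    have h2 : b < a * Real.exp (π * t * (b - a)) := by nlinarith
    calc b * Real.exp (-π * t * b)
        < (a * Real.exp (π * t * (b - a))) * Real.exp (-π * t * b) :=
          mul_lt_mul_of_pos_right h2 (Real.exp_pos _)
      _ = a * Real.exp (-π * t * a) := by rw [mul_assoc, mul_comm (Real.exp _), h1]
  nlinarith [Real.pi_pos]

lemma T4_monoA : StrictMonoOn T4 (Ioo 0 (π/2)) := by
  intro s hs t ht hst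
  have hrw : ∀ x ∈ Ioo (0:ℝ) (π/2),
      T4 x = ∑' k : ℤ, (Real.sqrt x)⁻¹ * Real.exp (-π * x⁻¹ * ((k:ℝ) - 1/2)^2) := by
    intro x hx
    rw [funceq4 hx.1, T2', tsum_mul_left]
  have hm : ∀ k : ℤ, 1/4 ≤ ((k:ℝ) - 1/2)^2 := by
    intro k
    rcases (by omega : k ≤ 0 ∨ 1 ≤ k) with h | h
    · have h' : (k:ℝ) ≤ 0 := by exact_mod_cast h
      nlinarith
    · have h' : (1:ℝ) ≤ (k:ℝ) := by exact_mod_cast h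
      nlinarith
  rw [hrw s hs, hrw t ht]
  refine Summable.tsum_lt_tsum (i := 0)
    (fun k => (termA_strictMono (hm k) hs ht hst).le) (termA_strictMono (hm 0) hs ht hst)
    ?_ ?_
  · exact (summable2 (inv_pos.2 hs.1)).mul_left _
  · exact (summable2 (inv_pos.2 ht.1)).mul_left _

lemma T4_monoB : StrictMonoOn T4 (Ici (1/2 : ℝ)) := by
  intro s hs t ht hst
  have hs0 : (0:ℝ) < s := lt_of_lt_of_le (by norm_num) hs
  have ht0 : (0:ℝ) < t := lt_of_lt_of_le (by norm_num) ht
  rw [T4_pair hs0, T4_pair ht0]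
  have hab : ∀ j : ℕ, StrictAntiOn
      (fun x : ℝ => Real.exp (-π * x * (2*(j:ℝ)+1)^2) - Real.exp (-π * x * (2*(j:ℝ)+2)^2))
      (Ici (1/2 : ℝ)) := by
    intro j
    exact termB_strictAnti (by nlinarith [Nat.cast_nonneg (α := ℝ) j])
      (by nlinarith [Nat.cast_nonneg (α := ℝ) j]) (by nlinarith [Nat.cast_nonneg (α := ℝ) j])
  have hlt : ∑' j : ℕ, (Real.exp (-π * t * (2*(j:ℝ)+1)^2) - Real.exp (-π * t * (2*(j:ℝ)+2)^2))
      < ∑' j : ℕ, (Real.exp (-π * s * (2*(j:ℝ)+1)^2) - Real.exp (-π * s * (2*(j:ℝ)+2)^2)) :=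
    Summable.tsum_lt_tsum (fun j => (hab j hs ht hst).le) (hab 0 hs ht hst)
      ((summable_pair1 ht0).sub (summable_pair2 ht0))
      ((summable_pair1 hs0).sub (summable_pair2 hs0))
  linarith

lemma T4_strictMono : StrictMonoOn T4 (Ioi 0) := by
  intro s hs t ht hst
  rcases lt_or_ge t (π/2) with h | h
  · exact T4_monoA ⟨hs, lt_trans hst h⟩ ⟨lt_trans hs hst, h⟩ hst
  · rcases le_or_gt (1/2 : ℝ) s with h2 | h2
    · exact T4_monoB h2 (le_trans h2 hst.le) hst
    · have k1 : T4 s < T4 (3/2) := by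
        refine T4_monoA ⟨hs, by nlinarith [Real.pi_gt_three]⟩
          ⟨by norm_num, by nlinarith [Real.pi_gt_three]⟩ (by linarith)
      have k2 : T4 (3/2) < T4 t := by
        refine T4_monoB (by norm_num) (by simp only [mem_Ici]; nlinarith [Real.pi_gt_three]) ?_
        nlinarith [Real.pi_gt_three]
      linarith


lemma contT3 {t₀ : ℝ} (ht₀ : 0 < t₀) : ContinuousAt T3 t₀ := by
  set ε := t₀/2 with hε
  have hε0 : 0 < ε := by positivity
  have hF : Continuous (fun t : ℝ => ∑' k : ℤ, Real.exp (-π * max t ε * (k:ℝ)^2)) := by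
    refine continuous_tsum (fun k => ?_) (summable3 hε0) (fun k x => ?_)
    · exact Real.continuous_exp.comp (by continuity)
    · rw [Real.norm_eq_abs, abs_of_pos (Real.exp_pos _)]
      apply Real.exp_le_exp.2
      nlinarith [le_max_right x ε, Real.pi_pos, sq_nonneg (k:ℝ),
        mul_nonneg (mul_nonneg Real.pi_pos.le (sub_nonneg.2 (le_max_right x ε))) (sq_nonneg (k:ℝ))]
  refine hF.continuousAt.congr ?_
  filter_upwards [Ioi_mem_nhds (by linarith : ε < t₀)] with x hx
  simp only [T3]
  refine tsum_congr fun k => by rw [max_eq_left (le_of_lt hx)]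

lemma contT4 {t₀ : ℝ} (ht₀ : 0 < t₀) : ContinuousAt T4 t₀ := by
  set ε := t₀/2 with hε
  have hε0 : 0 < ε := by positivity
  have hF : Continuous (fun t : ℝ => ∑' k : ℤ, (-1:ℝ)^k * Real.exp (-π * max t ε * (k:ℝ)^2)) := by
    refine continuous_tsum (fun k => ?_) (summable3 hε0) (fun k x => ?_)
    · exact (continuous_const).mul (Real.continuous_exp.comp (by continuity))
    · rw [Real.norm_eq_abs, abs_mul]
      have h1 : |(-1:ℝ)^k| = 1 := by
        rcases Int.even_or_odd k with h | h
        · rw [h.neg_one_zpow]; norm_num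
        · rw [h.neg_one_zpow]; norm_num
      rw [h1, one_mul, abs_of_pos (Real.exp_pos _)]
      apply Real.exp_le_exp.2
      nlinarith [mul_nonneg (mul_nonneg Real.pi_pos.le (sub_nonneg.2 (le_max_right x ε))) (sq_nonneg (k:ℝ))]
  refine hF.continuousAt.congr ?_
  filter_upwards [Ioi_mem_nhds (by linarith : ε < t₀)] with x hx
  simp only [T4]
  refine tsum_congr fun k => by rw [max_eq_left (le_of_lt hx)]


noncomputable def RR (t : ℝ) : ℝ := ∑' n : ℕ, Real.exp (-π * t * ((n:ℝ) + 1)^2)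

lemma summableR {t : ℝ} (ht : 0 < t) :
    Summable (fun n : ℕ => Real.exp (-π * t * ((n:ℝ) + 1)^2)) := by
  have hg : Summable (fun n : ℕ => Real.exp (-π * t) * Real.exp (-π * t) ^ n) :=
    (summable_geometric_of_lt_one (Real.exp_pos _).le
      (Real.exp_lt_one_iff.2 (by nlinarith [Real.pi_pos]))).mul_left _
  refine Summable.of_nonneg_of_le (fun n => (Real.exp_pos _).le) (fun n => ?_) hg
  rw [← Real.exp_nat_mul, ← Real.exp_add]
  apply Real.exp_le_exp.2
  nlinarith [mul_nonneg (mul_nonneg (mul_nonneg Real.pi_pos.le ht.le)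
    (Nat.cast_nonneg (α := ℝ) n)) (by positivity : (0:ℝ) ≤ (n:ℝ) + 1)]

lemma exp_negpi_tendsto : Tendsto (fun x : ℝ => Real.exp (-π * x)) atTop (𝓝 0) := by
  have h : Tendsto (fun x : ℝ => π * x) atTop atTop :=
    Tendsto.const_mul_atTop Real.pi_pos tendsto_id
  have := Real.tendsto_exp_neg_atTop_nhds_zero.comp h
  exact this.congr fun x => by simp [Function.comp, neg_mul]

lemma RR_tendsto : Tendsto RR atTop (𝓝 0) := by
  have hb : Tendsto (fun x : ℝ => Real.exp (-π * x) * (1 - Real.exp (-π * x))⁻¹) atTop (𝓝 0) := by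
    have := exp_negpi_tendsto.mul ((tendsto_const_nhds.sub exp_negpi_tendsto).inv₀ (by norm_num : (1:ℝ) - 0 ≠ 0))
    simpa using this
  refine tendsto_of_tendsto_of_tendsto_of_le_of_le' tendsto_const_nhds hb ?_ ?_
  · filter_upwards [eventually_gt_atTop (0:ℝ)] with x hx
    exact tsum_nonneg fun n => (Real.exp_pos _).le
  · filter_upwards [eventually_gt_atTop (0:ℝ)] with x hx
    have hr1 : Real.exp (-π * x) < 1 := Real.exp_lt_one_iff.2 (by nlinarith [Real.pi_pos, hx])
    have := tsum_geometric_of_lt_one (Real.exp_pos (-π * x)).le hr1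
    calc RR x ≤ ∑' n : ℕ, Real.exp (-π * x) * Real.exp (-π * x) ^ n := by
          refine Summable.tsum_le_tsum (fun n => ?_) (summableR hx)
            ((summable_geometric_of_lt_one (Real.exp_pos _).le hr1).mul_left _)
          rw [← Real.exp_nat_mul, ← Real.exp_add]
          apply Real.exp_le_exp.2
          nlinarith [mul_nonneg (mul_nonneg (mul_nonneg Real.pi_pos.le hx.le)
            (Nat.cast_nonneg (α := ℝ) n)) (by positivity : (0:ℝ) ≤ (n:ℝ) + 1)]
      _ = Real.exp (-π * x) * (1 - Real.exp (-π * x))⁻¹ := by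
          rw [tsum_mul_left, this]

lemma T3_tendsto : Tendsto T3 atTop (𝓝 1) := by
  have h : Tendsto (fun x => 1 + 2 * RR x) atTop (𝓝 (1 + 2 * 0)) :=
    tendsto_const_nhds.add (RR_tendsto.const_mul 2)
  rw [show (1:ℝ) + 2 * 0 = 1 by norm_num] at h
  refine h.congr' ?_
  filter_upwards [eventually_gt_atTop (0:ℝ)] with x hx
  rw [T3_decomp hx, RR]

lemma T4_tendsto : Tendsto T4 atTop (𝓝 1) := by
  refine tendsto_of_tendsto_of_tendsto_of_le_of_le' (g := fun x => 1 - 2 * RR x)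
    (h := fun x => 1 + 2 * RR x) ?_ ?_ ?_ ?_
  · have h : Tendsto (fun x => 1 - 2 * RR x) atTop (𝓝 (1 - 2 * 0)) :=
      tendsto_const_nhds.sub (RR_tendsto.const_mul 2)
    simpa using h
  · have h : Tendsto (fun x => 1 + 2 * RR x) atTop (𝓝 (1 + 2 * 0)) :=
      tendsto_const_nhds.add (RR_tendsto.const_mul 2)
    simpa using h
  · filter_upwards [eventually_gt_atTop (0:ℝ)] with x hx
    rw [T4_decomp hx]
    have hA : -RR x ≤ ∑' n : ℕ, (-1:ℝ)^(n+1) * Real.exp (-π * x * ((n:ℝ) + 1)^2) := by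
      rw [RR, ← tsum_neg]
      refine Summable.tsum_le_tsum (fun n => ?_) (summableR hx).neg ?_
      · rcases Nat.even_or_odd (n+1) with h | h
        · rw [h.neg_one_pow, one_mul]; nlinarith [Real.exp_pos (-π * x * ((n:ℝ) + 1)^2)]
        · rw [h.neg_one_pow]; nlinarith [Real.exp_pos (-π * x * ((n:ℝ) + 1)^2)]
      · refine Summable.of_norm ?_
        refine (summableR hx).congr fun n => ?_
        rw [Real.norm_eq_abs, abs_mul, abs_pow, abs_neg, abs_one, one_pow, one_mul,
          abs_of_pos (Real.exp_pos _)]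
    linarith
  · filter_upwards [eventually_gt_atTop (0:ℝ)] with x hx
    rw [T4_decomp hx]
    have hA : ∑' n : ℕ, (-1:ℝ)^(n+1) * Real.exp (-π * x * ((n:ℝ) + 1)^2) ≤ RR x := by
      rw [RR]
      refine Summable.tsum_le_tsum (fun n => ?_) ?_ (summableR hx)
      · rcases Nat.even_or_odd (n+1) with h | h
        · rw [h.neg_one_pow, one_mul]
        · rw [h.neg_one_pow]; nlinarith [Real.exp_pos (-π * x * ((n:ℝ) + 1)^2)]
      · refine Summable.of_norm ?_
        refine (summableR hx).congr fun n => ?_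
        rw [Real.norm_eq_abs, abs_mul, abs_pow, abs_neg, abs_one, one_pow, one_mul,
          abs_of_pos (Real.exp_pos _)]
    linarith

lemma T2'_tendsto : Tendsto T2' atTop (𝓝 0) := by
  have hb : Tendsto (fun u : ℝ => Real.exp (-π * (u-1) * (1/4)) * T2' 1) atTop (𝓝 0) := by
    have h1 : Tendsto (fun u : ℝ => π * ((u-1) * (1/4))) atTop atTop := by
      apply Tendsto.const_mul_atTop Real.pi_pos
      exact Tendsto.atTop_mul_const (by norm_num)
        (tendsto_atTop_add_const_right _ _ tendsto_id)
    have h2 := (Real.tendsto_exp_neg_atTop_nhds_zero.comp h1).mul_const (T2' 1)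
    simpa [Function.comp, mul_assoc, mul_comm, mul_left_comm, neg_mul] using h2
  refine tendsto_of_tendsto_of_tendsto_of_le_of_le' tendsto_const_nhds hb ?_ ?_
  · filter_upwards [eventually_gt_atTop (0:ℝ)] with u hu
    exact tsum_nonneg fun k => (Real.exp_pos _).le
  · filter_upwards [eventually_ge_atTop (2:ℝ)] with u hu
    rw [T2', T2', ← tsum_mul_left]
    refine Summable.tsum_le_tsum (fun k => ?_) (summable2 (by linarith)) ((summable2 one_pos).mul_left _)
    rw [← Real.exp_add]
    apply Real.exp_le_exp.2
    have hm : 1/4 ≤ ((k:ℝ) - 1/2)^2 := by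
      rcases (by omega : k ≤ 0 ∨ 1 ≤ k) with h | h
      · have h' : (k:ℝ) ≤ 0 := by exact_mod_cast h
        nlinarith
      · have h' : (1:ℝ) ≤ (k:ℝ) := by exact_mod_cast h
        nlinarith
    nlinarith [Real.pi_pos, mul_nonneg (mul_nonneg Real.pi_pos.le (by linarith : (0:ℝ) ≤ u - 1))
      (by linarith : (0:ℝ) ≤ ((k:ℝ) - 1/2)^2 - 1/4)]

noncomputable def FF (t : ℝ) : ℝ := T4 t ^ 2 / T3 t ^ 2

lemma exp_zpow_sq (x : ℝ) (k : ℤ) : Real.exp x ^ (k^2) = Real.exp (x * (k:ℝ)^2) := by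
  have h0 : k^2 = ((k.natAbs * k.natAbs : ℕ) : ℤ) := by
    rw [Int.natAbs_mul_self]; ring
  rw [h0, zpow_natCast, ← Real.exp_nat_mul]
  congr 1
  push_cast [Nat.cast_natAbs]
  rw [← abs_mul, abs_mul_self]
  ring

lemma theta3_eq (t : ℝ) : theta3 (Real.exp (-Real.pi * t)) = T3 t := by
  unfold theta3 T3
  exact tsum_congr fun k => by rw [exp_zpow_sq]

lemma theta4_eq (t : ℝ) : theta4 (Real.exp (-Real.pi * t)) = T4 t := by
  unfold theta4 T4
  exact tsum_congr fun k => by rw [exp_zpow_sq]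

lemma fun_eq : (fun t : ℝ => theta4 (Real.exp (-Real.pi * t)) ^ 2 /
    theta3 (Real.exp (-Real.pi * t)) ^ 2) = FF :=
  funext fun t => by rw [theta3_eq, theta4_eq, FF]

lemma FF_mono : StrictMonoOn FF (Ioi 0) := by
  intro s hs t ht hst
  have h4 := T4_strictMono hs ht hst
  have h3 := T3_strictAnti hs ht hst
  have p4s := T4_pos hs
  have p3t := T3_pos ht
  have p3s := T3_pos hs
  rw [FF, FF, div_lt_div_iff₀ (pow_pos p3s 2) (pow_pos p3t 2)]
  have h4' : T4 s ^ 2 < T4 t ^ 2 := by nlinarith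
  have h3' : T3 t ^ 2 < T3 s ^ 2 := by nlinarith
  exact mul_lt_mul'' h4' h3' (by positivity) (by positivity)

lemma FF_mapsTo : MapsTo FF (Ioi 0) (Ioo 0 1) := by
  intro t ht
  have p4 := T4_pos ht
  have p3 := T3_pos ht
  simp only [FF, mem_Ioo]
  constructor
  · exact div_pos (by positivity) (by positivity)
  · rw [div_lt_one (by positivity)]
    have := T4_lt_T3 ht
    nlinarith

lemma FF_cont : ContinuousOn FF (Ioi 0) := fun t ht =>
  (((contT4 ht).pow 2).div ((contT3 ht).pow 2)
    (pow_ne_zero 2 (T3_pos ht).ne')).continuousWithinAt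

lemma FF_tendsto_top : Tendsto FF atTop (𝓝 1) := by
  have h := (T4_tendsto.pow 2).div (T3_tendsto.pow 2) (by norm_num : (1:ℝ)^2 ≠ 0)
  rw [show (1:ℝ)^2/1^2 = 1 by norm_num] at h
  exact h

lemma FF_tendsto_zero : Tendsto FF (𝓝[>] (0:ℝ)) (𝓝 0) := by
  have hg : Tendsto (fun u : ℝ => T2' u ^ 2 / T3 u ^ 2) atTop (𝓝 0) := by
    have h := (T2'_tendsto.pow 2).div (T3_tendsto.pow 2) (by norm_num : (1:ℝ)^2 ≠ 0)
    convert h using 2 <;> norm_num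
  refine (hg.comp tendsto_inv_nhdsGT_zero).congr' ?_
  filter_upwards [self_mem_nhdsWithin] with t ht
  have ht0 : (0:ℝ) < t := ht
  have hc : ((Real.sqrt t)⁻¹)^2 ≠ 0 := by
    have := Real.sqrt_pos.2 ht0
    positivity
  show T2' t⁻¹ ^ 2 / T3 t⁻¹ ^ 2 = FF t
  rw [FF, funceq4 ht0, funceq3 ht0, mul_pow, mul_pow, mul_div_mul_left _ _ hc]

lemma FF_surjOn : SurjOn FF (Ioi 0) (Ioo 0 1) := by
  intro y hy
  obtain ⟨a, hay, ha⟩ := ((FF_tendsto_zero.eventually_lt_const hy.1).and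
    self_mem_nhdsWithin).exists
  obtain ⟨b, hby, hab⟩ := ((FF_tendsto_top.eventually_const_lt hy.2).and
    (eventually_gt_atTop a)).exists
  have ha0 : (0:ℝ) < a := ha
  have hsub : Icc a b ⊆ Ioi 0 := fun x hx => lt_of_lt_of_le ha0 hx.1
  have hcont : ContinuousOn FF (Icc a b) := FF_cont.mono hsub
  obtain ⟨x, hx, hxy⟩ := intermediate_value_Icc hab.le hcont ⟨hay.le, hby.le⟩
  exact ⟨x, hsub hx, hxy⟩

end Aux

open Real Set Filter Topology in
theorem complementary_modulus_strictMono_bijOn :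
    StrictMonoOn (fun t : ℝ => theta4 (Real.exp (-Real.pi * t)) ^ 2 /
        theta3 (Real.exp (-Real.pi * t)) ^ 2) (Set.Ioi 0) ∧
    Set.BijOn (fun t : ℝ => theta4 (Real.exp (-Real.pi * t)) ^ 2 /
        theta3 (Real.exp (-Real.pi * t)) ^ 2) (Set.Ioi 0) (Set.Ioo 0 1) := by
  rw [fun_eq]
  exact ⟨FF_mono, FF_mapsTo, FF_mono.injOn, FF_surjOn⟩
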